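/- Let ∃X[F] be an ∃CNF formula and Z ⊆ X. The variables of Z are not redundant in ∃X[F] if and only if there exists a W-boundary point of F, for some W ⊆ Z, that is X-removable in F. -/

import Mathlib

open scoped Classical

namespace QE

variable {α : Type*}

/-- A literal: a variable together with a polarity. -/
abbrev Lit (α : Type*) := α × Bool

/-- A clause: a finite disjunction of literals. -/
abbrev Clause (α : Type*) := Finset (Lit α)

/-- A CNF formula: a finite conjunction of clauses. -/
abbrev CNF (α : Type*) := Finset (Clause α)

/-- A (partial) assignment of Boolean values to variables. -/
abbrev Assign (α : Type*) := α → Option Bool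

/-- The variables of a clause. -/
def clauseVars (C : Clause α) : Set α := {v | ∃ b, (v, b) ∈ C}

/-- The variables of a CNF formula. -/
def cnfVars (F : CNF α) : Set α := ⋃ C ∈ F, clauseVars C

/-- The variables assigned by a partial assignment. -/
def avars (q : Assign α) : Set α := {v | q v ≠ none}

/-- The (partial) assignment `r` extends the (partial) assignment `q`, i.e. `q ⊆ r`. -/
def AExtends (q r : Assign α) : Prop := ∀ v b, q v = some b → r v = some b

/-- The complete assignment (point) `p` extends the partial assignment `q`, i.e. `q ⊆ p`. -/
def PExtends (q : Assign α) (p : α → Bool) : Prop := ∀ v b, q v = some b → p v = b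

/-- A complete assignment satisfies a clause. -/
def pointSatClause (p : α → Bool) (C : Clause α) : Prop := ∃ l ∈ C, p l.1 = l.2

/-- A complete assignment satisfies a CNF formula. -/
def pointSatCNF (p : α → Bool) (F : CNF α) : Prop := ∀ C ∈ F, pointSatClause p C

/-- A partial assignment satisfies a clause. -/
def asatClause (q : Assign α) (C : Clause α) : Prop := ∃ l ∈ C, q l.1 = some l.2

/-- A partial assignment falsifies a literal. -/
def afalsLit (q : Assign α) (l : Lit α) : Prop := q l.1 = some (!l.2)

/-- The cofactor of a clause: remove the literals falsified by `q`. -/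
noncomputable def cofClause (q : Assign α) (C : Clause α) : Clause α :=
  C.filter (fun l => ¬ afalsLit q l)

/-- The cofactor `F|q`: remove clauses satisfied by `q` and delete from the
remaining clauses all literals falsified by `q`. -/
noncomputable def cofactor (q : Assign α) (F : CNF α) : CNF α :=
  (F.filter (fun C => ¬ asatClause q C)).image (cofClause q)

/-- The CNF formula `F` implies the clause `C`. -/
def Implies (F : CNF α) (C : Clause α) : Prop :=
  ∀ p : α → Bool, pointSatCNF p F → pointSatClause p C

/-- `C` is a `Z`-clause: `V(C) ∩ Z ≠ ∅`. -/
def IsZClause (Z : Set α) (C : Clause α) : Prop := (clauseVars C ∩ Z).Nonempty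

/-- `F^Z`: the set of `Z`-clauses of `F`. -/
noncomputable def zClauses (F : CNF α) (Z : Set α) : CNF α :=
  F.filter (fun C => IsZClause Z C)

/-- `p` is a `Z`-boundary point of `F`: `Z ≠ ∅`, `p` falsifies `F`, every clause of `F`
falsified by `p` is a `Z`-clause, and the latter condition fails for every proper subset of `Z`. -/
def BoundaryPt (F : CNF α) (Z : Set α) (p : α → Bool) : Prop :=
  Z.Nonempty ∧ ¬ pointSatCNF p F ∧
  (∀ C ∈ F, ¬ pointSatClause p C → IsZClause Z C) ∧
  (∀ Z' ⊂ Z, ¬ (∀ C ∈ F, ¬ pointSatClause p C → IsZClause Z' C))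

/-- A point `p` is `W`-removable in `F`: there is a clause `C` such that `F` implies `C`,
`p` falsifies `C`, and `V(C) ∩ W = ∅`. -/
def Removable (F : CNF α) (W : Set α) (p : α → Bool) : Prop :=
  ∃ C : Clause α, Implies F C ∧ ¬ pointSatClause p C ∧ clauseVars C ∩ W = ∅

/-- The variables of `Z` are redundant in `∃X[F]` with scope `W`: for every nonempty
subset `Vs ⊆ Z` there is no `W`-removable `Vs`-boundary point of `F`. -/
def RedundantWithScope (F : CNF α) (Z W : Set α) : Prop :=
  ∀ Vs : Set α, Vs ⊆ Z → Vs.Nonempty →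
    ∀ p : α → Bool, BoundaryPt F Vs p → ¬ Removable F W p

/-- The D-sequent `(∃X[F], q, W) → Z`: the variables of `Z` are redundant
in `∃X[F|q]` with scope `W`. -/
def DSeq (F : CNF α) (X : Set α) (q : Assign α) (W Z : Set α) : Prop :=
  RedundantWithScope (cofactor q F) Z W

/-- `∃X[F] ≡ ∃X[H]`. -/
def ExEquiv (X : Set α) (F H : CNF α) : Prop :=
  ∀ p : α → Bool,
    (∃ p' : α → Bool, (∀ v ∉ X, p' v = p v) ∧ pointSatCNF p' F) ↔
    (∃ p' : α → Bool, (∀ v ∉ X, p' v = p v) ∧ pointSatCNF p' H)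

/-- The variables of `Z` are redundant in `∃X[F]`: `∃X[F] ≡ ∃X[F \ F^Z]`. -/
noncomputable def Redundant (F : CNF α) (X Z : Set α) : Prop :=
  ExEquiv X F (F \ zClauses F Z)

/-- Clauses `C` and `C'` contain opposite literals of the variable `w`. -/
def oppLitOn (C C' : Clause α) (w : α) : Prop := ∃ b, (w, b) ∈ C ∧ (w, !b) ∈ C'

/-- Clauses `C` and `C'` are resolvable on `v`: they contain opposite literals of
exactly one variable, namely `v`. -/
def ResolvableOn (C C' : Clause α) (v : α) : Prop := ∀ w, oppLitOn C C' w ↔ w = v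

/-- A variable `v` is blocked in `F`: no two clauses of `F` are resolvable on `v`. -/
def BlockedVar (F : CNF α) (v : α) : Prop :=
  ∀ C ∈ F, ∀ C' ∈ F, ¬ ResolvableOn C C' v

/-- Assignments `q` and `q'` assign opposite values to the variable `w`. -/
def aOppOn (q q' : Assign α) (w : α) : Prop := ∃ b, q w = some b ∧ q' w = some (!b)

/-- Assignments `q` and `q'` are resolvable on `v`: exactly one variable assigned by
both of them, namely `v`, is assigned opposite values. -/
def AResolvableOn (q q' : Assign α) (v : α) : Prop := ∀ w, aOppOn q q' w ↔ w = v

/-- The resolvent of assignments `q` and `q'` on `v`: all single-variable assignments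
of `q` and `q'` except those to `v`. -/
noncomputable def aResolvent (q q' : Assign α) (v : α) : Assign α :=
  fun w => if w = v then none else ((q w).orElse (fun _ => q' w))




/-- Proposition 2: The variables of `Z ⊆ X` are not redundant in `∃X[F]` iff
there is an `X`-removable `W`-boundary point of `F` for some `W ⊆ Z`. -/
theorem not_redundant_iff_removable_boundaryPt {α : Type*} (F : CNF α) (X Z : Set α)
    (hX : X ⊆ cnfVars F) (hZX : Z ⊆ X) :
    ¬ Redundant F X Z ↔
      ∃ W ⊆ Z, ∃ p : α → Bool, BoundaryPt F W p ∧ Removable F X p := by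
  classical
  set Vf : Finset α := F.biUnion (fun C => C.image Prod.fst) with hVf
  have hVfmem : ∀ v, v ∈ Vf ↔ v ∈ cnfVars F := by
    intro v
    simp only [hVf, Finset.mem_biUnion, Finset.mem_image, cnfVars, clauseVars,
      Set.mem_iUnion, Set.mem_setOf_eq]
    constructor
    · rintro ⟨C, hC, ⟨a, b⟩, hl, rfl⟩; exact ⟨C, hC, b, hl⟩
    · rintro ⟨C, hC, b, hb⟩; exact ⟨C, hC, (v, b), hb, rfl⟩
  constructor
  · intro hnr
    unfold Redundant ExEquiv at hnr
    push_neg at hnr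
    obtain ⟨y, hy⟩ := hnr
    have hmono : (∃ p', (∀ v ∉ X, p' v = y v) ∧ pointSatCNF p' F) →
        (∃ p', (∀ v ∉ X, p' v = y v) ∧ pointSatCNF p' (F \ zClauses F Z)) := by
      rintro ⟨p', h1, h2⟩
      exact ⟨p', h1, fun C hC => h2 C (Finset.mem_sdiff.mp hC).1⟩
    have key : (∀ p' : α → Bool, (∀ v ∉ X, p' v = y v) → ¬ pointSatCNF p' F) ∧
        ∃ p', (∀ v ∉ X, p' v = y v) ∧ pointSatCNF p' (F \ zClauses F Z) := by
      rcases hy with ⟨hEx, hAll⟩ | h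
      · obtain ⟨p', h1, h2⟩ := hmono hEx
        exact absurd h2 (hAll p' h1)
      · exact h
    obtain ⟨hA, p, hpy, hpF'⟩ := key
    have hpF : ¬ pointSatCNF p F := hA p hpy
    have hfalsZ : ∀ C ∈ F, ¬ pointSatClause p C → IsZClause Z C := by
      intro C hC hns
      by_contra hnz
      exact hns (hpF' C (Finset.mem_sdiff.mpr
        ⟨hC, fun hmem => hnz ((Finset.mem_filter.mp hmem).2)⟩))
    -- Z is finite
    have hZV : Z ⊆ cnfVars F := fun v hv => hX (hZX hv)
    have hZfin : Z.Finite := Set.Finite.subset Vf.finite_toSet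
      (fun v hv => (hVfmem v).mpr (hZV hv))
    -- find a minimal subset W of Z such that all falsified clauses are W-clauses
    set P : Set α → Prop := fun W => ∀ C ∈ F, ¬ pointSatClause p C → IsZClause W C with hP
    set T : Finset (Finset α) := hZfin.toFinset.powerset.filter (fun W => P ↑W) with hT
    have hZT : hZfin.toFinset ∈ T := by
      refine Finset.mem_filter.mpr ⟨Finset.mem_powerset.mpr le_rfl, ?_⟩
      simpa [hP, Set.Finite.coe_toFinset] using hfalsZ
    obtain ⟨m, hmT, hmmin⟩ : ∃ m ∈ T, ∀ x ∈ T, ¬x < m := by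
      obtain ⟨m, hm⟩ := Finset.exists_minimal (s := T) ⟨_, hZT⟩
      exact ⟨m, hm.prop, fun x hx => hm.not_lt hx⟩
    obtain ⟨hmZ, hmP⟩ := Finset.mem_filter.mp hmT
    set W : Set α := ↑m with hW
    have hWZ : W ⊆ Z := by
      intro v hv
      have := Finset.mem_powerset.mp hmZ hv
      simpa [Set.Finite.mem_toFinset] using this
    have hPW : P W := hmP
    -- minimality
    have hmin : ∀ W' ⊂ W, ¬ P W' := by
      intro W' hW' hPW'
      have hW'fin : W'.Finite := m.finite_toSet.subset hW'.subset
      have hsub : hW'fin.toFinset ∈ T := by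
        refine Finset.mem_filter.mpr ⟨Finset.mem_powerset.mpr ?_, ?_⟩
        · intro v hv
          have : v ∈ W' := by simpa [Set.Finite.mem_toFinset] using hv
          exact (Set.Finite.mem_toFinset _).mpr (hWZ (hW'.subset this))
        · simpa [Set.Finite.coe_toFinset] using hPW'
      refine hmmin _ hsub ?_
      rw [Finset.lt_iff_ssubset, ← Finset.coe_ssubset]
      simpa [Set.Finite.coe_toFinset] using hW'
    -- W is nonempty
    have hWne : W.Nonempty := by
      have : ∃ C ∈ F, ¬ pointSatClause p C := by
        by_contra h
        push_neg at h
        exact hpF h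
      obtain ⟨C0, hC0, hC0f⟩ := this
      obtain ⟨v, _, hv2⟩ := hPW C0 hC0 hC0f
      exact ⟨v, hv2⟩
    -- the removing clause
    set Crem : Clause α := (Vf.filter (fun v => v ∉ X)).image (fun v => (v, !(p v)))
      with hCrem
    have hCremFals : ¬ pointSatClause p Crem := by
      rintro ⟨l, hl, hsat⟩
      obtain ⟨v, hv, rfl⟩ := Finset.mem_image.mp hl
      simp at hsat
    have hCremX : clauseVars Crem ∩ X = ∅ := by
      ext v
      simp only [Set.mem_inter_iff, Set.mem_empty_iff_false, iff_false, not_and]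
      rintro ⟨b, hb⟩ hvX
      obtain ⟨w, hw, hwe⟩ := Finset.mem_image.mp hb
      have : w = v := congrArg Prod.fst hwe
      subst this
      exact (Finset.mem_filter.mp hw).2 hvX
    have hCremImp : Implies F Crem := by
      intro q hq
      by_contra hns
      have hqp : ∀ v ∈ Vf, v ∉ X → q v = p v := by
        intro v hv hvX
        have hmem : (v, !(p v)) ∈ Crem :=
          Finset.mem_image.mpr ⟨v, Finset.mem_filter.mpr ⟨hv, hvX⟩, rfl⟩
        have : ¬ q v = !(p v) := fun h => hns ⟨(v, !(p v)), hmem, h⟩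
        cases hpv : p v <;> cases hqv : q v <;> simp_all
      set p'' : α → Bool := fun v => if v ∈ Vf then q v else y v with hp''
      have h1 : ∀ v ∉ X, p'' v = y v := by
        intro v hvX
        by_cases hv : v ∈ Vf
        · simp only [hp'', if_pos hv]
          rw [hqp v hv hvX, hpy v hvX]
        · simp [hp'', if_neg hv]
      have h2 : pointSatCNF p'' F := by
        intro C hC
        obtain ⟨l, hl, hsat⟩ := hq C hC
        refine ⟨l, hl, ?_⟩
        have hlV : l.1 ∈ Vf := by
          refine Finset.mem_biUnion.mpr ⟨C, hC, Finset.mem_image.mpr ⟨l, hl, rfl⟩⟩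
        simp only [hp'', if_pos hlV]
        exact hsat
      exact hA p'' h1 h2
    exact ⟨W, hWZ, p, ⟨hWne, hpF, hPW, fun W' hW' => hmin W' hW'⟩,
      Crem, hCremImp, hCremFals, hCremX⟩
  · rintro ⟨W, hWZ, p, hbp, C, himp, hfals, hCX⟩ hred
    unfold Redundant ExEquiv at hred
    have hR : ∃ p', (∀ v ∉ X, p' v = p v) ∧ pointSatCNF p' (F \ zClauses F Z) := by
      refine ⟨p, fun _ _ => rfl, ?_⟩
      intro D hD
      rw [Finset.mem_sdiff] at hD
      by_contra hns
      obtain ⟨v, hv1, hv2⟩ := hbp.2.2.1 D hD.1 hns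
      exact hD.2 (Finset.mem_filter.mpr ⟨hD.1, v, hv1, hWZ hv2⟩)
    obtain ⟨p', hp'X, hp'F⟩ := (hred p).mpr hR
    obtain ⟨l, hl, hsat⟩ := himp p' hp'F
    have hlX : l.1 ∉ X := by
      intro h
      have : l.1 ∈ clauseVars C ∩ X := ⟨⟨l.2, hl⟩, h⟩
      rw [hCX] at this
      exact this
    exact hfals ⟨l, hl, (hp'X l.1 hlX) ▸ hsat⟩

end QE
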